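/- For every M,N-invariant set Δ there is a unique pair of words (v,w) over the alphabet {0,1,•}, with v of length M and w of length N, such that Δ fits (v,w); moreover the number of 1's in v equals the number of 1's in w. -/

import Mathlib

/-- The alphabet {0, 1, •}. -/
inductive Symb where
  | zero : Symb
  | one : Symb
  | bullet : Symb
deriving DecidableEq

/-- An `M,N`-invariant set: a subset of ℕ with finite complement,
closed under adding `M` and adding `N`. -/
def Invariant (M N : ℕ) (Δ : Set ℕ) : Prop :=
  {n : ℕ | n ∉ Δ}.Finite ∧ ∀ i ∈ Δ, i + M ∈ Δ ∧ i + N ∈ Δ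

/-- `c` is a north step of `Δ`: `c ∉ Δ` and `c + N ∈ Δ`. -/
def NorthStep (N : ℕ) (Δ : Set ℕ) (c : ℕ) : Prop := c ∉ Δ ∧ c + N ∈ Δ

/-- `c` is an east step of `Δ`: `c ∉ Δ` and `c + M ∈ Δ`. -/
def EastStep (M : ℕ) (Δ : Set ℕ) (c : ℕ) : Prop := c ∉ Δ ∧ c + M ∈ Δ

/-- `area Δ` is the number of `c ≥ M + N` with `c ∉ Δ`. -/
noncomputable def area (M N : ℕ) (Δ : Set ℕ) : ℕ := {c : ℕ | M + N ≤ c ∧ c ∉ Δ}.ncard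

/-- `pdinv Δ` is the number of pairs `(c, d)` with `c < d`, `M ≤ d < c + M`,
`c` a north step of `Δ`, and `d ∉ Δ`. -/
noncomputable def pdinv (M N : ℕ) (Δ : Set ℕ) : ℕ :=
  {p : ℕ × ℕ | p.1 < p.2 ∧ M ≤ p.2 ∧ p.2 < p.1 + M ∧ NorthStep N Δ p.1 ∧ p.2 ∉ Δ}.ncard

/-- `Δ` fits the pair of words `(v, w)`, where `v` has length `M` and `w` has length `N`. -/
def Fits (M N : ℕ) (Δ : Set ℕ) (v w : List Symb) : Prop :=
  v.length = M ∧ w.length = N ∧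
  (∀ (i : ℕ) (hi : i < v.length),
    (v.get ⟨i, hi⟩ = Symb.bullet ↔ i ∈ Δ) ∧
    (v.get ⟨i, hi⟩ = Symb.one ↔ NorthStep N Δ i) ∧
    (v.get ⟨i, hi⟩ = Symb.zero ↔ (i ∉ Δ ∧ i + N ∉ Δ))) ∧
  (∀ (i : ℕ) (hi : i < w.length),
    (w.get ⟨i, hi⟩ = Symb.bullet ↔ i ∈ Δ) ∧
    (w.get ⟨i, hi⟩ = Symb.one ↔ EastStep M Δ i) ∧
    (w.get ⟨i, hi⟩ = Symb.zero ↔ (i ∉ Δ ∧ i + M ∉ Δ)))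

/-- Decrement: `dec Δ = {i : ℕ | i + 1 ∈ Δ}`. -/
def dec (Δ : Set ℕ) : Set ℕ := {i : ℕ | i + 1 ∈ Δ}

open Classical in
noncomputable def symbOf (Δ : Set ℕ) (K : ℕ) (i : ℕ) : Symb :=
  if i ∈ Δ then Symb.bullet else if i + K ∈ Δ then Symb.one else Symb.zero

lemma symbOf_iffs (Δ : Set ℕ) (K i : ℕ) :
    (symbOf Δ K i = Symb.bullet ↔ i ∈ Δ) ∧
    (symbOf Δ K i = Symb.one ↔ (i ∉ Δ ∧ i + K ∈ Δ)) ∧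
    (symbOf Δ K i = Symb.zero ↔ (i ∉ Δ ∧ i + K ∉ Δ)) := by
  unfold symbOf
  by_cases h1 : i ∈ Δ <;> by_cases h2 : i + K ∈ Δ <;> simp [h1, h2]

lemma fits_canonical (M N : ℕ) (Δ : Set ℕ) :
    Fits M N Δ ((List.range M).map (symbOf Δ N)) ((List.range N).map (symbOf Δ M)) := by
  refine ⟨by simp, by simp, ?_, ?_⟩ <;>
  · intro i hi
    simp only [List.length_map, List.length_range] at hi
    have : (∀ K, ((List.range _).map (symbOf Δ K)).get ⟨i, by simpa⟩ = symbOf Δ K i) := by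
      intro K; simp
    simp only [List.get_eq_getElem, List.getElem_map, List.getElem_range]
    exact ⟨(symbOf_iffs Δ _ i).1, (symbOf_iffs Δ _ i).2.1, (symbOf_iffs Δ _ i).2.2⟩

lemma fits_unique_word (Δ : Set ℕ) (K : ℕ) (u : List Symb)
    (h : ∀ (i : ℕ) (hi : i < u.length),
      (u.get ⟨i, hi⟩ = Symb.bullet ↔ i ∈ Δ) ∧
      (u.get ⟨i, hi⟩ = Symb.one ↔ (i ∉ Δ ∧ i + K ∈ Δ)) ∧
      (u.get ⟨i, hi⟩ = Symb.zero ↔ (i ∉ Δ ∧ i + K ∉ Δ))) :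
    u = (List.range u.length).map (symbOf Δ K) := by
  apply List.ext_get (by simp)
  intro i hi hi'
  simp only [List.get_eq_getElem, List.getElem_map, List.getElem_range]
  obtain ⟨hb, ho, hz⟩ := h i hi
  unfold symbOf
  by_cases h1 : i ∈ Δ
  · simpa [h1] using hb.mpr h1
  · by_cases h2 : i + K ∈ Δ
    · simpa [h1, h2] using ho.mpr ⟨h1, h2⟩
    · simpa [h1, h2] using hz.mpr ⟨h1, h2⟩

lemma count_map_range (n : ℕ) (f : ℕ → Symb) (a : Symb) :
    (((List.range n).map f).count a : ℤ) =
      ∑ i ∈ Finset.range n, (if f i = a then (1 : ℤ) else 0) := by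
  induction n with
  | zero => simp
  | succ n ih =>
    rw [List.range_succ, List.map_append, List.count_append, Finset.sum_range_succ]
    simp only [List.map_cons, List.map_nil]
    push_cast
    rw [ih]
    by_cases h : f n = a <;> simp [h, List.count_cons]

/-- Every `M,N`-invariant set `Δ` fits a unique pair of words `(v, w)`
over `{0,1,•}` with `v` of length `M` and `w` of length `N`; moreover for any such pair
the number of 1's in `v` equals the number of 1's in `w`. -/
theorem fits_existsUnique_and_ones_eq (M N : ℕ) (hM : 0 < M) (hN : 0 < N)
    (Δ : Set ℕ) (hΔ : Invariant M N Δ) :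
    (∃! vw : List Symb × List Symb, Fits M N Δ vw.1 vw.2) ∧
    ∀ v w : List Symb, Fits M N Δ v w → v.count Symb.one = w.count Symb.one := by
  classical
  -- canonical words
  set V := (List.range M).map (symbOf Δ N) with hV
  set W := (List.range N).map (symbOf Δ M) with hW
  have hcan : Fits M N Δ V W := fits_canonical M N Δ
  have huniq : ∀ v w : List Symb, Fits M N Δ v w → v = V ∧ w = W := by
    intro v w hf
    obtain ⟨hlv, hlw, hv, hw⟩ := hf
    constructor
    · have := fits_unique_word Δ N v (by
        intro i hi
        exact ⟨(hv i hi).1, (hv i hi).2.1, (hv i hi).2.2⟩)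
      rwa [hlv] at this
    · have := fits_unique_word Δ M w (by
        intro i hi
        exact ⟨(hw i hi).1, (hw i hi).2.1, (hw i hi).2.2⟩)
      rwa [hlw] at this
  refine ⟨⟨(V, W), hcan, fun vw h => Prod.ext (huniq vw.1 vw.2 h).1 (huniq vw.1 vw.2 h).2⟩, ?_⟩
  -- count equality
  intro v w hf
  obtain ⟨hv, hw⟩ := huniq v w hf
  subst hv; subst hw
  -- work in ℤ
  have : (V.count Symb.one : ℤ) = (W.count Symb.one : ℤ) := by
    rw [hV, hW, count_map_range, count_map_range]
    set χ : ℕ → ℤ := fun c => if c ∈ Δ then 0 else 1 with hχ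
    have key : ∀ K, (∀ i ∈ Δ, i + K ∈ Δ) →
        ∀ i, (if symbOf Δ K i = Symb.one then (1 : ℤ) else 0) = χ i - χ (i + K) := by
      intro K hKcl i
      unfold symbOf
      by_cases h1 : i ∈ Δ
      · have h2 : i + K ∈ Δ := hKcl i h1
        simp [h1, h2, hχ]
      · by_cases h2 : i + K ∈ Δ <;> simp [h1, h2, hχ]
    have hMN : ∀ i ∈ Δ, i + M ∈ Δ := fun i hi => (hΔ.2 i hi).1
    have hNN : ∀ i ∈ Δ, i + N ∈ Δ := fun i hi => (hΔ.2 i hi).2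
    rw [Finset.sum_congr rfl (fun i _ => key N hNN i),
        Finset.sum_congr rfl (fun i _ => key M hMN i)]
    rw [Finset.sum_sub_distrib, Finset.sum_sub_distrib]
    have shift : ∀ (a b : ℕ), ∑ i ∈ Finset.range a, χ (i + b) = ∑ i ∈ Finset.Ico b (a + b), χ i := by
      intro a b
      rw [Finset.sum_Ico_eq_sum_range]
      simp [add_comm]
    rw [shift M N, shift N M]
    have split : ∀ (a b : ℕ), ∑ i ∈ Finset.range a, χ i + ∑ i ∈ Finset.Ico a (a + b), χ i
        = ∑ i ∈ Finset.range (a + b), χ i := by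
      intro a b
      rw [Finset.range_eq_Ico, Finset.range_eq_Ico]
      exact Finset.sum_Ico_consecutive χ (Nat.zero_le a) (Nat.le_add_right a b)
    have h1 := split M N
    have h2 := split N M
    rw [add_comm N M] at h2 ⊢
    linarith
  exact_mod_cast this
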